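/- Let G be a polycyclic group in which all factors of some subnormal series are infinite cyclic (poly-infinite-cyclic). Then there is a decreasing sequence of normal subgroups G = G₀ ⊵ G₁ ⊵ ... ⊵ G_l = {e} of G such that each quotient G_i/G_{i+1} is a free abelian group of finite rank. -/

import Mathlib

open Subgroup Function

/-- Poly-(subgroup-of-ℤ): a descending series whose factors embed into `ℤ`. -/
def AuxPolyLE (k : ℕ) (G : Type*) [Group G] : Prop :=
  ∃ N : ℕ → Subgroup G, N 0 = ⊤ ∧ N k = ⊥ ∧
    ∀ i < k, N (i + 1) ≤ N i ∧
      ∃ f : ↥(N i) →* Multiplicative ℤ, f.ker = (N (i + 1)).subgroupOf (N i)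

/-- The inclusion hom from a comap. -/
def auxIncl {G H : Type*} [Group G] [Group H] (e : H →* G) (A : Subgroup G) :
    ↥(A.comap e) →* ↥A where
  toFun x := ⟨e x.1, x.2⟩
  map_one' := by ext; simp
  map_mul' x y := by ext; simp

/-- Transport along an injective hom (covers subgroups and isomorphisms). -/
theorem auxPolyLE_of_injective {G H : Type*} [Group G] [Group H] (e : H →* G)
    (he : Function.Injective e) {k : ℕ} (h : AuxPolyLE k G) : AuxPolyLE k H := by
  obtain ⟨N, hN0, hNk, hstep⟩ := h
  refine ⟨fun j => (N j).comap e, ?_, ?_, ?_⟩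
  · show (N 0).comap e = ⊤
    rw [hN0, comap_top]
  · show (N k).comap e = ⊥
    rw [hNk]
    simpa [MonoidHom.comap_bot] using (MonoidHom.ker_eq_bot_iff e).mpr he
  · intro i hi
    obtain ⟨hle, f, hker⟩ := hstep i hi
    refine ⟨fun x hx => hle hx, f.comp (auxIncl e (N i)), ?_⟩
    ext x
    simp only [MonoidHom.mem_ker, MonoidHom.comp_apply, mem_subgroupOf, mem_comap]
    rw [← MonoidHom.mem_ker, hker, mem_subgroupOf]
    rfl

/-- Two homs to `ℤ`: if `ker f ≤ ker g` and `g` is nontrivial then `ker g ≤ ker f`. -/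
theorem auxKerLeKer {H : Type*} [Group H] (f g : H →* Multiplicative ℤ)
    (hle : f.ker ≤ g.ker) (y : H) (hy : g y ≠ 1) : g.ker ≤ f.ker := by
  intro x hx
  have hgx : g x = 1 := hx
  set b : ℤ := Multiplicative.toAdd (f x) with hb
  set c : ℤ := Multiplicative.toAdd (f y) with hc
  set a : ℤ := Multiplicative.toAdd (g y) with ha
  have hane : a ≠ 0 := by
    intro h0
    exact hy (by rw [← ofAdd_toAdd (g y), ← ha, h0]; rfl)
  have hw : x ^ c * y ^ (-b) ∈ f.ker := by
    simp only [MonoidHom.mem_ker, map_mul, map_zpow]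
    rw [← ofAdd_toAdd (f x), ← ofAdd_toAdd (f y), ← hb, ← hc]
    simp only [← ofAdd_zsmul, ← ofAdd_add, smul_eq_mul]
    rw [mul_comm c b]
    simp [mul_comm]
  have hw' := hle hw
  simp only [MonoidHom.mem_ker, map_mul, map_zpow, hgx, one_zpow, one_mul] at hw'
  have : (-b) • a = 0 := by
    have := congrArg Multiplicative.toAdd hw'
    simp [toAdd_zpow] at this ⊢
    rcases this with h | h
    · exact Or.inl h
    · exact Or.inr (by rw [ha, h]; rfl)
  have hb0 : b = 0 := by
    have h2 : b = 0 ∨ a = 0 := by simpa [smul_eq_mul] using this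
    exact h2.resolve_right hane
  show f x = 1
  rw [← ofAdd_toAdd (f x), ← hb, hb0]; rfl

/-- Generic factor transport into a `subgroupOf`. -/
theorem auxStepGen {G : Type*} [Group G] (K A B X Y : Subgroup G)
    (f : ↥A →* Multiplicative ℤ) (hker : f.ker = B.subgroupOf A) (hXA : X ≤ A)
    (hY : ∀ x : G, x ∈ K → (x ∈ Y ↔ x ∈ X ∧ x ∈ B)) :
    ∃ g : ↥(X.subgroupOf K) →* Multiplicative ℤ,
      g.ker = (Y.subgroupOf K).subgroupOf (X.subgroupOf K) := by
  refine ⟨f.comp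
    { toFun := fun x => ⟨x.1.1, hXA x.2⟩
      map_one' := by ext; rfl
      map_mul' := fun x y => by ext; rfl }, ?_⟩
  ext x
  simp only [MonoidHom.mem_ker, MonoidHom.comp_apply, MonoidHom.coe_mk, OneHom.coe_mk]
  rw [← MonoidHom.mem_ker, hker, mem_subgroupOf, mem_subgroupOf, mem_subgroupOf]
  show (x.1.1 ∈ B) ↔ x.1.1 ∈ Y
  rw [hY x.1.1 x.1.2]
  exact ⟨fun h => ⟨x.2, h⟩, fun h => h.2⟩

/-- Kernel of a nontrivial hom to `ℤ` drops the poly length by one. -/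
theorem auxPolyLE_ker {G : Type*} [Group G] {k : ℕ} (h : AuxPolyLE (k + 1) G)
    (φ : G →* Multiplicative ℤ) (hφ : φ.ker ≠ ⊤) : AuxPolyLE k ↥(φ.ker) := by
  classical
  obtain ⟨N, hN0, hNk, hstep⟩ := h
  set K := φ.ker with hK
  have hmono : ∀ b ≤ k + 1, ∀ a ≤ b, N b ≤ N a := by
    intro b
    induction b with
    | zero => intro _ a ha; interval_cases a; exact le_rfl
    | succ b ih =>
      intro hb a ha
      rcases Nat.eq_or_lt_of_le ha with rfl | hlt
      · exact le_rfl
      · exact le_trans (hstep b (by omega)).1 (ih (by omega) a (by omega))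
  have hP0 : ∃ x ∈ N 0, φ x ≠ 1 := by
    by_contra hcon
    push_neg at hcon
    apply hφ
    ext x
    simp only [Subgroup.mem_top, iff_true]
    exact hcon x (by rw [hN0]; trivial)
  have hPk : ¬ ∃ x ∈ N (k + 1), φ x ≠ 1 := by
    push_neg
    intro x hx
    rw [hNk] at hx
    rw [Subgroup.mem_bot.mp hx, map_one]
  obtain ⟨i, hik, hPi, hPi1⟩ :
      ∃ i, i ≤ k ∧ (∃ x ∈ N i, φ x ≠ 1) ∧ ¬ (∃ x ∈ N (i + 1), φ x ≠ 1) := by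
    set Q : ℕ → Prop := fun n => ∃ x ∈ N n, φ x ≠ 1 with hQ
    refine ⟨Nat.findGreatest Q (k + 1), ?_, ?_, ?_⟩
    · have h1 : Nat.findGreatest Q (k + 1) ≤ k + 1 := Nat.findGreatest_le _
      rcases Nat.eq_or_lt_of_le h1 with heq | _
      · exact absurd (heq ▸ Nat.findGreatest_spec (P := Q) (Nat.zero_le _) (show Q 0 from hP0)) hPk
      · omega
    · exact (Nat.findGreatest_spec (P := Q) (Nat.zero_le _) (show Q 0 from hP0) : Q _)
    · intro hcon
      have h1 : Nat.findGreatest Q (k + 1) ≤ k + 1 := Nat.findGreatest_le _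
      have h2 : Nat.findGreatest Q (k + 1) + 1 ≤ k + 1 := by
        rcases Nat.eq_or_lt_of_le h1 with heq | _
        · exact absurd (heq ▸ Nat.findGreatest_spec (P := Q) (Nat.zero_le _) (show Q 0 from hP0)) hPk
        · omega
      exact Nat.findGreatest_is_greatest (Nat.lt_succ_self _) h2 hcon
  have htriv : ∀ x ∈ N (i + 1), φ x = 1 := by
    intro x hx
    by_contra hne
    exact hPi1 ⟨x, hx, hne⟩
  have hkey : ∀ x, x ∈ N i → (φ x = 1 → x ∈ N (i + 1)) := by
    intro x hx h1
    obtain ⟨hle, f, hker⟩ := hstep i (by omega)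
    obtain ⟨y, hy, hyne⟩ := hPi
    have hh := auxKerLeKer f (φ.comp (N i).subtype)
      (by
        intro z hz
        rw [hker, mem_subgroupOf] at hz
        show φ z.1 = 1
        exact htriv _ hz) ⟨y, hy⟩ hyne
    have h2 : (⟨x, hx⟩ : ↥(N i)) ∈ f.ker := hh (by simpa using h1)
    rw [hker, mem_subgroupOf] at h2
    exact h2
  have hNiK : ∀ x : G, (x ∈ N i ∧ x ∈ K) ↔ x ∈ N (i + 1) := by
    intro x
    constructor
    · rintro ⟨h1, h2⟩; exact hkey x h1 h2
    · intro hx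
      exact ⟨hmono (i+1) (by omega) i (by omega) hx, htriv x hx⟩
  set C : ℕ → Subgroup G := fun j => if j ≤ i then N j ⊓ K else N (j + 1) with hC
  have hCle : ∀ j, j ≤ i → C j = N j ⊓ K := by intro j hj; simp [hC, hj]
  have hCge : ∀ j, i ≤ j → C j = N (j + 1) := by
    intro j hj
    rcases Nat.lt_or_ge i j with hlt | hge
    · simp [hC, Nat.not_le.mpr hlt]
    · have hji : j = i := le_antisymm (le_trans hge le_rfl) hj
      subst hji
      simp only [hC, le_refl, if_pos]
      ext x
      simp only [Subgroup.mem_inf]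
      exact hNiK x
  refine ⟨fun j => (C j).subgroupOf K, ?_, ?_, ?_⟩
  · show (C 0).subgroupOf K = ⊤
    rw [hCle 0 (Nat.zero_le _), hN0]
    rw [top_inf_eq, subgroupOf_self]
  · show (C k).subgroupOf K = ⊥
    have hCk : C k = ⊥ := by
      rcases Nat.eq_or_lt_of_le hik with heq | hlt
      · rw [hCge k (le_of_eq heq), hNk]
      · rw [hCge k (by omega), hNk]
    rw [hCk]
    ext x
    simp [mem_subgroupOf]
  · intro j hj
    have hCC : C (j + 1) ≤ C j := by
      by_cases hji : j + 1 ≤ i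
      · rw [hCle _ hji, hCle _ (by omega)]
        exact inf_le_inf_right K (hmono (j+1) (by omega) j (by omega))
      · rw [hCge (j+1) (by omega)]
        by_cases hji2 : j ≤ i
        · rw [hCle j hji2]
          have hji3 : j = i := by omega
          subst hji3
          intro x hx
          rw [Subgroup.mem_inf]
          exact (hNiK x).mpr (hmono (j+2) (by omega) (j+1) (by omega) hx)
        · rw [hCge j (by omega)]
          exact hmono (j+2) (by omega) (j+1) (by omega)
    constructor
    · intro x hx
      rw [mem_subgroupOf] at *
      exact hCC hx
    show ∃ g : ↥((C j).subgroupOf K) →* Multiplicative ℤ,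
      g.ker = ((C (j+1)).subgroupOf K).subgroupOf ((C j).subgroupOf K)
    by_cases hji : j + 1 ≤ i
    · obtain ⟨hle, f, hker⟩ := hstep j (by omega)
      rw [hCle _ hji, hCle _ (by omega)]
      exact auxStepGen K (N j) (N (j+1)) (N j ⊓ K) (N (j+1) ⊓ K) f hker inf_le_left
        (fun x _ => by
          simp only [Subgroup.mem_inf]
          constructor
          · rintro ⟨h1, h2⟩
            exact ⟨⟨hmono (j+1) (by omega) j (by omega) h1, h2⟩, h1⟩
          · rintro ⟨⟨_, h2⟩, h3⟩
            exact ⟨h3, h2⟩)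
    · obtain ⟨hle, f, hker⟩ := hstep (j + 1) (by omega)
      rw [hCge j (by omega), hCge (j+1) (by omega)]
      exact auxStepGen K (N (j+1)) (N (j+2)) (N (j+1)) (N (j+2)) f hker le_rfl
        (fun x _ => ⟨fun h => ⟨hmono (j+2) (by omega) (j+1) (by omega) h, h⟩, fun h => h.2⟩)

/-- Extension of a f.g. group by a subgroup of `ℤ` is f.g. -/
theorem auxFG_of_ker_int {G : Type*} [Group G] (φ : G →* Multiplicative ℤ)
    (hfg : Group.FG ↥φ.ker) : Group.FG G := by
  obtain ⟨S, hS, hSfin⟩ := Group.fg_iff.mp hfg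
  obtain ⟨a, ha⟩ := Int.subgroup_cyclic (Subgroup.toAddSubgroup' φ.range)
  have hmem : Multiplicative.ofAdd a ∈ φ.range := by
    have : a ∈ Subgroup.toAddSubgroup' φ.range := by
      rw [ha]; exact AddSubgroup.subset_closure rfl
    exact this
  obtain ⟨g, hg⟩ := hmem
  rw [Group.fg_iff]
  refine ⟨(φ.ker.subtype '' S) ∪ {g}, ?_, (hSfin.image _).union (Set.finite_singleton g)⟩
  rw [eq_top_iff]
  intro x _
  have hx : Multiplicative.toAdd (φ x) ∈ Subgroup.toAddSubgroup' φ.range := by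
    show Multiplicative.ofAdd (Multiplicative.toAdd (φ x)) ∈ φ.range
    rw [ofAdd_toAdd]
    exact ⟨x, rfl⟩
  rw [ha, AddSubgroup.mem_closure_singleton] at hx
  obtain ⟨n, hn⟩ := hx
  have hker : x * (g ^ n)⁻¹ ∈ φ.ker := by
    rw [MonoidHom.mem_ker, map_mul, map_inv, map_zpow, hg]
    have : φ x = Multiplicative.ofAdd (n • a) := by
      rw [hn, ofAdd_toAdd]
    rw [this, ofAdd_zsmul]
    group
  have hcl : x * (g ^ n)⁻¹ ∈ Subgroup.closure (φ.ker.subtype '' S ∪ {g}) := by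
    have h1 : (⟨x * (g ^ n)⁻¹, hker⟩ : ↥φ.ker) ∈ Subgroup.closure S := by
      rw [hS]; trivial
    have h2 : φ.ker.subtype ⟨x * (g ^ n)⁻¹, hker⟩ ∈
        Subgroup.map φ.ker.subtype (Subgroup.closure S) := Subgroup.mem_map_of_mem _ h1
    rw [MonoidHom.map_closure] at h2
    exact Subgroup.closure_mono Set.subset_union_left h2
  have hgmem : g ∈ Subgroup.closure (φ.ker.subtype '' S ∪ {g}) :=
    Subgroup.subset_closure (Set.mem_union_right _ rfl)
  have := mul_mem hcl (zpow_mem hgmem n)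
  simpa using this

/-- Poly-(≤ℤ) groups are finitely generated. -/
theorem auxFG {k : ℕ} : ∀ {G : Type*} [Group G], AuxPolyLE k G → Group.FG G := by
  induction k with
  | zero =>
    intro G _ h
    obtain ⟨N, hN0, hNk, _⟩ := h
    have : Subsingleton G := by
      constructor
      intro x y
      have hx : x ∈ N 0 := by rw [hN0]; trivial
      have hy : y ∈ N 0 := by rw [hN0]; trivial
      rw [hNk] at hx hy
      rw [Subgroup.mem_bot.mp hx, Subgroup.mem_bot.mp hy]
    exact Group.fg_of_finite
  | succ k ih =>
    intro G _ h
    obtain ⟨N, hN0, hNk, hstep⟩ := h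
    -- N 1 is AuxPolyLE k
    have h1 : AuxPolyLE k ↥(N 1) := by
      refine ⟨fun j => (N (j + 1)).subgroupOf (N 1), ?_, ?_, ?_⟩
      · show (N 1).subgroupOf (N 1) = ⊤
        exact subgroupOf_self _
      · show (N (k + 1)).subgroupOf (N 1) = ⊥
        rw [hNk]
        ext x
        simp [mem_subgroupOf]
      · intro j hj
        obtain ⟨hle, f, hker⟩ := hstep (j + 1) (by omega)
        constructor
        · intro x hx
          rw [mem_subgroupOf] at *
          exact hle hx
        show ∃ g : ↥((N (j + 1)).subgroupOf (N 1)) →* Multiplicative ℤ,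
          g.ker = ((N (j + 2)).subgroupOf (N 1)).subgroupOf ((N (j + 1)).subgroupOf (N 1))
        refine ⟨f.comp
          { toFun := fun x => ⟨x.1.1, x.2⟩
            map_one' := by ext; rfl
            map_mul' := fun x y => by ext; rfl }, ?_⟩
        ext x
        simp only [MonoidHom.mem_ker, MonoidHom.comp_apply, MonoidHom.coe_mk, OneHom.coe_mk]
        rw [← MonoidHom.mem_ker, hker, mem_subgroupOf]
        show (x.1 : G) ∈ N (j + 1 + 1) ↔ _
        rw [mem_subgroupOf, mem_subgroupOf]
    have hfgN1 : Group.FG ↥(N 1) := ih h1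
    obtain ⟨hle0, f, hker⟩ := hstep 0 (by omega)
    let ι : G →* ↥(N 0) :=
      { toFun := fun x => ⟨x, by rw [hN0]; trivial⟩
        map_one' := by ext; rfl
        map_mul' := fun x y => by ext; rfl }
    have hkerφ : (f.comp ι).ker = N 1 := by
      ext x
      rw [MonoidHom.mem_ker, MonoidHom.comp_apply, ← MonoidHom.mem_ker, hker, mem_subgroupOf]
      rfl
    refine auxFG_of_ker_int (f.comp ι) ?_
    rw [hkerφ]
    exact hfgN1

/-- A nontrivial poly-(≤ℤ) group has a nontrivial hom to `ℤ`. -/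
theorem auxExistsHom {G : Type*} [Group G] {k : ℕ} (h : AuxPolyLE k G)
    (hnt : (⊥ : Subgroup G) ≠ ⊤) : ∃ φ : G →* Multiplicative ℤ, φ.ker ≠ ⊤ := by
  classical
  obtain ⟨N, hN0, hNk, hstep⟩ := h
  have hex : ∃ j, N j ≠ ⊤ := ⟨k, by rw [hNk]; exact hnt⟩
  set j := Nat.find hex with hj
  have hjne : N j ≠ ⊤ := Nat.find_spec hex
  have hj0 : j ≠ 0 := fun h0 => hjne (by rw [h0, hN0])
  have hjk : j ≤ k := by
    by_contra hc
    push_neg at hc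
    exact absurd (hNk ▸ hnt) (by simpa using Nat.find_min hex hc)
  have hprev : N (j - 1) = ⊤ := by
    have := Nat.find_min hex (show j - 1 < j by omega)
    simpa using this
  obtain ⟨hle, f, hker⟩ := hstep (j - 1) (by omega)
  have hj1 : j - 1 + 1 = j := by omega
  rw [hj1] at hker
  let ι : G →* ↥(N (j - 1)) :=
    { toFun := fun x => ⟨x, by rw [hprev]; trivial⟩
      map_one' := by ext; rfl
      map_mul' := fun x y => by ext; rfl }
  refine ⟨f.comp ι, ?_⟩
  have : (f.comp ι).ker = N j := by
    ext x
    rw [MonoidHom.mem_ker, MonoidHom.comp_apply, ← MonoidHom.mem_ker, hker, mem_subgroupOf]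
    rfl
  rw [this]
  exact hjne

/-- For a f.g. group, the natural surjection onto the free part of its abelianization. -/
theorem auxPsi (G : Type*) [Group G] (hfg : Group.FG G) :
    ∃ (d : ℕ) (ψ : G →* Multiplicative (Fin d → ℤ)),
      Function.Surjective ψ ∧
      (∀ x : G, x ∈ ψ.ker ↔ ∃ n : ℤ, n ≠ 0 ∧ Abelianization.of x ^ n = 1) := by
  classical
  have hofsurj : Function.Surjective (Abelianization.of (G := G)) := fun y =>
    Quotient.inductionOn y fun g => ⟨g, rfl⟩
  haveI : Group.FG (Abelianization G) := Group.fg_of_surjective hofsurj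
  haveI : Module.Finite ℤ (Additive (Abelianization G)) :=
    Module.Finite.iff_addGroup_fg.mpr inferInstance
  set A := Additive (Abelianization G) with hA
  set T := Submodule.torsion ℤ A with hT
  haveI : Module.IsTorsionFree ℤ (A ⧸ T) := Submodule.QuotientTorsion.instIsTorsionFree
  haveI : Module.Free ℤ (A ⧸ T) := Module.free_of_finite_type_torsion_free'
  set d := Fintype.card (Module.Free.ChooseBasisIndex ℤ (A ⧸ T)) with hd
  let b := Module.Free.chooseBasis ℤ (A ⧸ T)
  let e : (A ⧸ T) ≃ₗ[ℤ] (Fin d → ℤ) := (b.reindex (Fintype.equivFin _)).equivFun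
  let χ : A →+ (Fin d → ℤ) := (e : (A ⧸ T) →ₗ[ℤ] (Fin d → ℤ)).toAddMonoidHom.comp
    T.mkQ.toAddMonoidHom
  refine ⟨d, { toFun := fun x => Multiplicative.ofAdd (χ (Additive.ofMul (Abelianization.of x)))
               map_one' := by simp
               map_mul' := fun x y => by
                 simp only [map_mul, ofMul_mul, map_add, ofAdd_add] }, ?_, ?_⟩
  · intro y
    obtain ⟨q, hq⟩ := e.surjective (Multiplicative.toAdd y)
    obtain ⟨aa, ha⟩ := T.mkQ_surjective q
    obtain ⟨x, hx⟩ := hofsurj (Additive.toMul aa)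
    refine ⟨x, ?_⟩
    show Multiplicative.ofAdd (χ (Additive.ofMul (Abelianization.of x))) = y
    rw [hx]
    show Multiplicative.ofAdd (e (T.mkQ aa)) = y
    rw [ha, hq, ofAdd_toAdd]
  · intro x
    rw [MonoidHom.mem_ker]
    show Multiplicative.ofAdd (χ (Additive.ofMul (Abelianization.of x))) = 1 ↔ _
    rw [show (1 : Multiplicative (Fin d → ℤ)) = Multiplicative.ofAdd 0 from rfl,
      Multiplicative.ofAdd.apply_eq_iff_eq]
    show e (T.mkQ (Additive.ofMul (Abelianization.of x))) = 0 ↔ _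
    rw [map_eq_zero_iff _ e.injective, Submodule.mkQ_apply, Submodule.Quotient.mk_eq_zero]
    constructor
    · intro h
      rw [Submodule.mem_torsion_iff] at h
      obtain ⟨n, hn⟩ := h
      refine ⟨(n : ℤ), mem_nonZeroDivisors_iff_ne_zero.mp n.2, ?_⟩
      rw [← ofMul_eq_zero, ofMul_zpow]
      exact hn
    · rintro ⟨n, hn0, hn⟩
      rw [Submodule.mem_torsion_iff]
      refine ⟨⟨n, mem_nonZeroDivisors_iff_ne_zero.mpr hn0⟩, ?_⟩
      show n • Additive.ofMul (Abelianization.of x) = 0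
      rw [← ofMul_zpow, hn, ofMul_one]

theorem auxCharMem {G : Type*} [Group G] {K : Subgroup G} (hK : K.Characteristic)
    (e : G ≃* G) {x : G} (h : x ∈ K) : e x ∈ K :=
  Subgroup.mem_comap.mp ((SetLike.ext_iff.mp (hK.fixed e) x).mpr h)

/-- Restrict an automorphism to a characteristic subgroup. -/
def auxRestrict {G : Type*} [Group G] (e : G ≃* G) (K : Subgroup G)
    (hK : K.Characteristic) : ↥K ≃* ↥K where
  toFun x := ⟨e x.1, auxCharMem hK e x.2⟩
  invFun x := ⟨e.symm x.1, auxCharMem hK e.symm x.2⟩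
  left_inv x := by ext; exact e.symm_apply_apply _
  right_inv x := by ext; exact e.apply_symm_apply _
  map_mul' x y := by ext; exact map_mul e _ _

theorem auxMapChar {G : Type*} [Group G] (K : Subgroup G) (hK : K.Characteristic)
    (L : Subgroup ↥K) (hL : L.Characteristic) : (L.map K.subtype).Characteristic := by
  constructor
  intro e
  ext x
  simp only [mem_comap]
  constructor
  · rintro ⟨y, hy, hyx⟩
    have hyx' : (y : G) = e x := hyx
    refine ⟨(auxRestrict e K hK).symm y, auxCharMem hL (auxRestrict e K hK).symm hy, ?_⟩
    show e.symm (y : G) = x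
    rw [hyx']
    exact e.symm_apply_apply x
  · rintro ⟨y, hy, hyx⟩
    have hyx' : (y : G) = x := hyx
    refine ⟨auxRestrict e K hK y, auxCharMem hL (auxRestrict e K hK) hy, ?_⟩
    show e (y : G) = e x
    rw [hyx']

theorem auxMemMap {G : Type*} [Group G] {K : Subgroup G} {A : Subgroup ↥K} {x : ↥K} :
    (x : G) ∈ A.map K.subtype ↔ x ∈ A := by
  constructor
  · rintro ⟨y, hy, hyx⟩
    have : y = x := Subtype.ext hyx
    exact this ▸ hy
  · intro h
    exact Subgroup.mem_map_of_mem _ h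

theorem auxStepMap {G : Type*} [Group G] (K : Subgroup G) (A B : Subgroup ↥K)
    {M : Type*} [Group M] (f : ↥A →* M) (hs : Function.Surjective f)
    (hk : f.ker = B.subgroupOf A) :
    ∃ g : ↥(A.map K.subtype) →* M, Function.Surjective g ∧
      g.ker = (B.map K.subtype).subgroupOf (A.map K.subtype) := by
  have hAK : A.map K.subtype ≤ K := map_subtype_le A
  let j : ↥(A.map K.subtype) →* ↥A :=
    { toFun := fun x => ⟨⟨x.1, hAK x.2⟩, auxMemMap.mp x.2⟩
      map_one' := by ext; rfl
      map_mul' := fun x y => by ext; rfl }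
  have hjsurj : Function.Surjective j := by
    intro a
    exact ⟨⟨a.1.1, Subgroup.mem_map_of_mem _ a.2⟩, Subtype.ext (Subtype.ext rfl)⟩
  refine ⟨f.comp j, hs.comp hjsurj, ?_⟩
  ext x
  rw [MonoidHom.mem_ker, MonoidHom.comp_apply, ← MonoidHom.mem_ker, hk, mem_subgroupOf,
    mem_subgroupOf]
  show ((⟨x.1, hAK x.2⟩ : ↥K) ∈ B) ↔ _
  rw [← auxMemMap (A := B) (x := ⟨x.1, hAK x.2⟩)]

theorem auxConclTrivial (G : Type*) [Group G] (hsub : Subsingleton G) :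
    ∃ (l : ℕ) (Gs : ℕ → Subgroup G), 0 < l ∧ Gs 0 = ⊤ ∧ Gs l = ⊥ ∧
      ∀ i < l, (Gs (i + 1) ≤ Gs i) ∧ (Gs i).Characteristic ∧ (Gs (i + 1)).Characteristic ∧
        ∃ (d : ℕ) (f : ↥(Gs i) →* Multiplicative (Fin d → ℤ)),
          Function.Surjective f ∧ f.ker = (Gs (i + 1)).subgroupOf (Gs i) := by
  have htb : (⊤ : Subgroup G) = ⊥ := by
    ext x
    simp only [Subgroup.mem_top, Subgroup.mem_bot, true_iff]
    exact Subsingleton.elim x 1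
  haveI : Subsingleton (Multiplicative (Fin 0 → ℤ)) :=
    ⟨fun a b => congrArg Multiplicative.ofAdd (funext fun i => i.elim0)⟩
  refine ⟨1, fun _ => ⊤, one_pos, rfl, htb, ?_⟩
  intro i _
  refine ⟨le_rfl, Subgroup.topCharacteristic, Subgroup.topCharacteristic,
    0, 1, fun y => ⟨1, Subsingleton.elim _ _⟩, ?_⟩
  ext x
  simp only [MonoidHom.mem_ker, MonoidHom.one_apply, mem_subgroupOf]
  simp

theorem auxMain (k : ℕ) : ∀ (G : Type*) [Group G], AuxPolyLE k G →
    ∃ (l : ℕ) (Gs : ℕ → Subgroup G), 0 < l ∧ Gs 0 = ⊤ ∧ Gs l = ⊥ ∧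
      ∀ i < l, (Gs (i + 1) ≤ Gs i) ∧ (Gs i).Characteristic ∧ (Gs (i + 1)).Characteristic ∧
        ∃ (d : ℕ) (f : ↥(Gs i) →* Multiplicative (Fin d → ℤ)),
          Function.Surjective f ∧ f.ker = (Gs (i + 1)).subgroupOf (Gs i) := by
  induction k with
  | zero =>
    intro G _ h
    obtain ⟨N, hN0, hNk, _⟩ := h
    refine auxConclTrivial G ⟨fun x y => ?_⟩
    have hx : x ∈ N 0 := by rw [hN0]; trivial
    have hy : y ∈ N 0 := by rw [hN0]; trivial
    rw [hNk] at hx hy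
    rw [Subgroup.mem_bot.mp hx, Subgroup.mem_bot.mp hy]
  | succ k ih =>
    intro G _ h
    by_cases hnt : (⊥ : Subgroup G) = ⊤
    · refine auxConclTrivial G ⟨fun x y => ?_⟩
      have hx : x ∈ (⊥ : Subgroup G) := by rw [hnt]; trivial
      have hy : y ∈ (⊥ : Subgroup G) := by rw [hnt]; trivial
      rw [Subgroup.mem_bot.mp hx, Subgroup.mem_bot.mp hy]
    · obtain ⟨φ, hφ⟩ := auxExistsHom h hnt
      have hfg : Group.FG G := auxFG h
      obtain ⟨d, ψ, hψs, hψk⟩ := auxPsi G hfg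
      set K := ψ.ker with hKdef
      have hkey : ∀ (e' : G ≃* G) (x : G), x ∈ K → e' x ∈ K := by
        intro e' x hx
        rw [hψk] at hx ⊢
        obtain ⟨n, hn0, hn⟩ := hx
        refine ⟨n, hn0, ?_⟩
        have h1 : Abelianization.of (e' x) =
            Abelianization.map e'.toMonoidHom (Abelianization.of x) := rfl
        rw [h1, ← map_zpow, hn, map_one]
      have hKchar : K.Characteristic := by
        constructor
        intro e
        ext x
        rw [mem_comap]
        constructor
        · intro hx
          have h2 := hkey e.symm _ hx
          simpa using h2
        · exact hkey e x
      have hKle : K ≤ φ.ker := by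
        intro x hx
        rw [hψk] at hx
        obtain ⟨n, hn0, hn⟩ := hx
        have h1 : φ x = Abelianization.lift φ (Abelianization.of x) :=
          (Abelianization.lift_apply_of φ x).symm
        have h2 : (φ x) ^ n = 1 := by rw [h1, ← map_zpow, hn, map_one]
        show φ x = 1
        have h3 := congrArg Multiplicative.toAdd h2
        rw [toAdd_zpow] at h3
        have h4 : n • Multiplicative.toAdd (φ x) = 0 := h3
        rw [smul_eq_mul] at h4
        have h5 : Multiplicative.toAdd (φ x) = 0 :=
          (mul_eq_zero.mp h4).resolve_left hn0
        rw [← ofAdd_toAdd (φ x), h5, ofAdd_zero]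
      have hker1 : AuxPolyLE k ↥(φ.ker) := auxPolyLE_ker h φ hφ
      have hKpoly : AuxPolyLE k ↥K :=
        auxPolyLE_of_injective (Subgroup.inclusion hKle)
          (Subgroup.inclusion_injective hKle) hker1
      obtain ⟨l, Gs', hl, h0, hend, hstep'⟩ := ih ↥K hKpoly
      have hG1K : (Gs' 0).map K.subtype = K := by
        rw [h0, ← MonoidHom.range_eq_map, Subgroup.range_subtype]
      refine ⟨l + 1, fun i => Nat.casesOn i ⊤ (fun j => (Gs' j).map K.subtype), by omega,
        rfl, ?_, ?_⟩
      · show (Gs' l).map K.subtype = ⊥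
        rw [hend]
        ext x
        simp [Subgroup.mem_map]
      · intro i hi
        cases i with
        | zero =>
          refine ⟨le_top, Subgroup.topCharacteristic, ?_, ?_⟩
          · show ((Gs' 0).map K.subtype).Characteristic
            rw [hG1K]
            exact hKchar
          · refine ⟨d, ψ.comp Subgroup.topEquiv.toMonoidHom,
              (by intro y; obtain ⟨x, hx⟩ := hψs y; exact ⟨⟨x, trivial⟩, hx⟩), ?_⟩
            ext x
            rw [MonoidHom.mem_ker, MonoidHom.comp_apply, mem_subgroupOf]
            show ψ x.1 = 1 ↔ (x : G) ∈ (Gs' 0).map K.subtype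
            rw [hG1K, ← MonoidHom.mem_ker]
        | succ j =>
          obtain ⟨hle, hchar1, hchar2, d', f, hs, hk⟩ := hstep' j (by omega)
          obtain ⟨g, hgs, hgk⟩ := auxStepMap K (Gs' j) (Gs' (j + 1)) f hs hk
          exact ⟨Subgroup.map_mono hle, auxMapChar K hKchar _ hchar1,
            auxMapChar K hKchar _ hchar2, d', g, hgs, hgk⟩

/-- If `G` is poly-infinite-cyclic (there is a subnormal series all of whose factors are
infinite cyclic; each factor being infinite cyclic is expressed via a surjective
homomorphism onto `ℤ` whose kernel is the next term), then there is a decreasing chain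
`G = G₀ ⊵ G₁ ⊵ ... ⊵ G_l = {e}` of subgroups, each normal in `G`, with every factor
`Gᵢ/Gᵢ₊₁` free abelian of finite rank (i.e. isomorphic to `ℤ^d`). -/
theorem stmt_15 (G : Type*) [Group G]
    (hpoly : ∃ (k : ℕ) (N : ℕ → Subgroup G), N 0 = ⊤ ∧ N k = ⊥ ∧
      ∀ i < k, (N (i + 1) ≤ N i) ∧
        ∃ f : ↥(N i) →* Multiplicative ℤ, Function.Surjective f ∧
          f.ker = (N (i + 1)).subgroupOf (N i)) :
    ∃ (l : ℕ) (Gs : ℕ → Subgroup G), 0 < l ∧ Gs 0 = ⊤ ∧ Gs l = ⊥ ∧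
      ∀ i < l, (Gs (i + 1) ≤ Gs i) ∧ (Gs i).Normal ∧ (Gs (i + 1)).Normal ∧
        ∃ (d : ℕ) (f : ↥(Gs i) →* Multiplicative (Fin d → ℤ)),
          Function.Surjective f ∧ f.ker = (Gs (i + 1)).subgroupOf (Gs i) := by
  obtain ⟨k, N, hN0, hNk, hstep⟩ := hpoly
  have hpoly' : AuxPolyLE k G := by
    refine ⟨N, hN0, hNk, fun i hi => ?_⟩
    obtain ⟨hle, f, _, hker⟩ := hstep i hi
    exact ⟨hle, f, hker⟩
  obtain ⟨l, Gs, hl, h0, hend, hstep'⟩ := auxMain k G hpoly'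
  refine ⟨l, Gs, hl, h0, hend, fun i hi => ?_⟩
  obtain ⟨hle, hc1, hc2, d, f, hs, hk⟩ := hstep' i hi
  haveI := hc1
  haveI := hc2
  exact ⟨hle, Subgroup.normal_of_characteristic _, Subgroup.normal_of_characteristic _,
    d, f, hs, hk⟩
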